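/- Let a,b,c,a',b',c' > 0 with ab − c > 0 and a'b' − c' > 0. Then the set T = {(R,S) ∈ ℝ² : Ra − a' > 0, Sb − b' > 0, (Rc − a'b)S + a'b' − c' > 0, R(S(ab−c) − ab') + c' > 0} is nonempty and open in ℝ². -/

import Mathlib

/-- The totally positive region
`T = {(R,S) : Ra−a' > 0, Sb−b' > 0, (Rc−a'b)S+a'b'−c' > 0, R(S(ab−c)−ab')+c' > 0}`
is nonempty and open in `ℝ²`. -/
theorem stmt13 (a b c a' b' c' : ℝ)
    (ha : 0 < a) (hb : 0 < b) (hc : 0 < c) (habc : 0 < a * b - c)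
    (ha' : 0 < a') (hb' : 0 < b') (hc' : 0 < c') (habc' : 0 < a' * b' - c') :
    ({p : ℝ × ℝ | p.1 * a - a' > 0 ∧ p.2 * b - b' > 0 ∧
        (p.1 * c - a' * b) * p.2 + a' * b' - c' > 0 ∧
        p.1 * (p.2 * (a * b - c) - a * b') + c' > 0}).Nonempty ∧
      IsOpen {p : ℝ × ℝ | p.1 * a - a' > 0 ∧ p.2 * b - b' > 0 ∧
        (p.1 * c - a' * b) * p.2 + a' * b' - c' > 0 ∧
        p.1 * (p.2 * (a * b - c) - a * b') + c' > 0} := by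
  constructor
  · set R : ℝ := a' / a + a' * b / c + 1 with hR
    set S : ℝ := b' / b + a * b' / (a * b - c) + 1 with hS
    have hRa : R * a = a' + a' * b * a / c + a := by
      rw [hR]; field_simp
    have hSb : S * b = b' + a * b' * b / (a * b - c) + b := by
      rw [hS]; field_simp
    have hRc : R * c - a' * b = a' * c / a + c := by
      rw [hR]; field_simp; ring
    have hSabc : S * (a * b - c) = b' * (a * b - c) / b + a * b' + (a * b - c) := by
      rw [hS]; have h := habc.ne'; rw [add_mul, add_mul, div_mul_cancel₀ _ h]; ring
    have hSpos : 0 < S := by positivity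
    have hRpos : 0 < R := by positivity
    refine ⟨(R, S), ?_, ?_, ?_, ?_⟩
    · have : 0 < a' * b * a / c + a := by positivity
      simp only [gt_iff_lt]; rw [hRa]; linarith
    · have : 0 < a * b' * b / (a * b - c) + b := by positivity
      simp only [gt_iff_lt]; rw [hSb]; linarith
    · have h1 : 0 < a' * c / a + c := by positivity
      have : 0 < (R * c - a' * b) * S := by rw [hRc]; positivity
      simp only [gt_iff_lt]; nlinarith
    · have h2 : 0 < b' * (a * b - c) / b := by positivity
      have h3 : 0 < S * (a * b - c) - a * b' := by rw [hSabc]; linarith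
      have : 0 < R * (S * (a * b - c) - a * b') := mul_pos hRpos h3
      simp only [gt_iff_lt]; linarith
  · simp only [gt_iff_lt, Set.setOf_and]
    refine IsOpen.inter (isOpen_lt continuous_const (by fun_prop))
      (IsOpen.inter (isOpen_lt continuous_const (by fun_prop))
        (IsOpen.inter (isOpen_lt continuous_const (by fun_prop))
          (isOpen_lt continuous_const (by fun_prop))))
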